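/- arXiv:0909.1879 — 2 statements merged into one kernel-verified Lean document; each statement's English description precedes it below -/
import Mathlib

section
/- With θ(x,q) = (x;q)_∞ (q/x;q)_∞ / (q;q)_∞^2, for every positive integer h, 0 < |q| < 1, and x ∈ C^×, one has θ(x,q) = ((q^h;q^h)_∞^{2h} / (q;q)_∞^2) · Π_{s=0}^{h−1} θ(q^s x, q^h). -/
open scoped BigOperators

noncomputable def qPoch (x q : ℂ) : ℂ := ∏' n : ℕ, (1 - x * q ^ n)

noncomputable def theta (x q : ℂ) : ℂ := qPoch x q * qPoch (q / x) q / (qPoch q q) ^ 2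

open Complex Filter

lemma summable_log_one_sub (y q : ℂ) (hq : ‖q‖ < 1) :
    Summable fun n : ℕ => Complex.log (1 - y * q ^ n) := by
  have hgeo : Summable fun n : ℕ => (3/2 : ℝ) * (‖y‖ * ‖q‖ ^ n) :=
    ((summable_geometric_of_lt_one (norm_nonneg q) hq).mul_left ‖y‖).mul_left _
  apply Summable.of_norm_bounded_eventually_nat hgeo
  have htend : Tendsto (fun n : ℕ => ‖y‖ * ‖q‖ ^ n) atTop (nhds 0) := by
    simpa using (tendsto_pow_atTop_nhds_zero_of_norm_lt_one
      (by simpa using hq)).const_mul ‖y‖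
  filter_upwards [htend.eventually_le_const (by norm_num : (0:ℝ) < 1/2)] with n hn
  have hnorm : ‖-(y * q ^ n)‖ ≤ 1/2 := by
    simpa [norm_mul, norm_pow] using hn
  have := Complex.norm_log_one_add_half_le_self hnorm
  simpa [sub_eq_add_neg, norm_mul, norm_pow, mul_assoc] using this

lemma multipliable_one_sub (y q : ℂ) (hq : ‖q‖ < 1) :
    Multipliable fun n : ℕ => 1 - y * q ^ n := by
  by_cases hzero : ∃ n : ℕ, 1 - y * q ^ n = 0
  · obtain ⟨n₀, hn₀⟩ := hzero
    refine ⟨0, ?_⟩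
    rw [HasProd]
    apply Tendsto.congr' _ tendsto_const_nhds
    filter_upwards [Filter.eventually_ge_atTop ({n₀} : Finset ℕ)] with s hs
    exact (Finset.prod_eq_zero (hs (Finset.mem_singleton_self n₀)) hn₀).symm
  · push_neg at hzero
    exact Complex.multipliable_of_summable_log (summable_log_one_sub y q hq)

lemma qPoch_ne_zero (y q : ℂ) (hq : ‖q‖ < 1) (hzero : ∀ n : ℕ, 1 - y * q ^ n ≠ 0) :
    qPoch y q ≠ 0 := by
  have := Complex.cexp_tsum_eq_tprod (f := fun n : ℕ => 1 - y * q ^ n)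
    (fun n => hzero n) (summable_log_one_sub y q hq)
  rw [qPoch, ← this]
  exact Complex.exp_ne_zero _

set_option maxHeartbeats 1000000 in
lemma qPoch_split (y q : ℂ) (hq : ‖q‖ < 1) (h : ℕ) (hh : 0 < h) :
    qPoch y q = ∏ s ∈ Finset.range h, qPoch (q ^ s * y) (q ^ h) := by
  haveI : NeZero h := ⟨hh.ne'⟩
  have hqh : ‖q ^ h‖ < 1 := by
    rw [norm_pow]; exact pow_lt_one₀ (norm_nonneg q) hq hh.ne'
  set e : ℕ ≃ Fin h × ℕ := (Nat.divModEquiv h).trans (Equiv.prodComm ℕ (Fin h)) with he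
  have hterm : ∀ (s : Fin h) (m : ℕ),
      (1 : ℂ) - y * q ^ (e.symm (s, m)) = 1 - (q ^ (s : ℕ) * y) * (q ^ h) ^ m := by
    intro s m
    have h1 : e.symm (s, m) = m * h + (s : ℕ) := by
      simp [he, Nat.divModEquiv]
    rw [h1, ← pow_mul]
    ring
  have hmul : Multipliable fun n : ℕ => 1 - y * q ^ n := multipliable_one_sub y q hq
  have hmul2 : Multipliable fun p : Fin h × ℕ => (1 : ℂ) - y * q ^ (e.symm p) :=
    e.symm.multipliable_iff.mpr hmul
  have hinner : ∀ s : Fin h, Multipliable fun m : ℕ => (1 : ℂ) - y * q ^ (e.symm (s, m)) :=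
    fun s => (multipliable_one_sub (q ^ (s : ℕ) * y) (q ^ h) hqh).congr
      fun m => (hterm s m).symm
  have key : qPoch y q = ∏' p : Fin h × ℕ, ((1 : ℂ) - y * q ^ (e.symm p)) := by
    rw [qPoch]
    exact (Equiv.tprod_eq e.symm fun n => 1 - y * q ^ n).symm
  rw [key, hmul2.tprod_prod' hinner, tprod_fintype,
    ← Fin.prod_univ_eq_prod_range (fun s => qPoch (q ^ s * y) (q ^ h)) h]
  refine Finset.prod_congr rfl fun s _ => ?_
  rw [qPoch]
  exact tprod_congr fun m => hterm s m

theorem theta_factorization (q x : ℂ) (h : ℕ) (hh : 0 < h)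
    (hq0 : 0 < ‖q‖) (hq1 : ‖q‖ < 1) (hx : x ≠ 0) :
    theta x q =
      (qPoch (q ^ h) (q ^ h)) ^ (2 * h) / (qPoch q q) ^ 2 *
        ∏ s ∈ Finset.range h, theta (q ^ s * x) (q ^ h) := by
  have hq : ‖q‖ < 1 := hq1
  have hqne : q ≠ 0 := by simpa using hq0.ne'
  have hqh : ‖q ^ h‖ < 1 := by
    rw [norm_pow]; exact pow_lt_one₀ (norm_nonneg q) hq hh.ne'
  have hA : qPoch (q ^ h) (q ^ h) ≠ 0 := by
    refine qPoch_ne_zero _ _ hqh fun n hn => ?_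
    have h1 : q ^ h * (q ^ h) ^ n = 1 := by
      have := sub_eq_zero.mp hn
      linear_combination -this
    have h2 : q ^ h * (q ^ h) ^ n = (q ^ h) ^ (n + 1) := by rw [pow_succ]; ring
    rw [h2] at h1
    have : ‖(q ^ h) ^ (n + 1)‖ < 1 := by
      rw [norm_pow]; exact pow_lt_one₀ (norm_nonneg _) hqh (Nat.succ_ne_zero n)
    rw [h1] at this
    simp at this
  have h1 : qPoch x q = ∏ s ∈ Finset.range h, qPoch (q ^ s * x) (q ^ h) :=
    qPoch_split x q hq h hh
  have h2 : qPoch (q / x) q = ∏ s ∈ Finset.range h, qPoch (q ^ h / (q ^ s * x)) (q ^ h) := by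
    rw [qPoch_split (q / x) q hq h hh, ← Finset.prod_range_reflect]
    refine Finset.prod_congr rfl fun s hs => ?_
    have hsh : s < h := Finset.mem_range.mp hs
    congr 1
    have hstep : q ^ (h - 1 - s) * (q / x) = q ^ (h - 1 - s + 1) / x := by
      rw [pow_succ]; ring
    rw [hstep, div_eq_div_iff hx (mul_ne_zero (pow_ne_zero _ hqne) hx)]
    have hexp : h - 1 - s + 1 + s = h := by omega
    rw [show (q : ℂ) ^ h = q ^ (h - 1 - s + 1) * q ^ s from by rw [← pow_add, hexp]]
    ring
  have h3 : ∏ s ∈ Finset.range h, theta (q ^ s * x) (q ^ h)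
      = (qPoch x q * qPoch (q / x) q) / (qPoch (q ^ h) (q ^ h)) ^ (2 * h) := by
    simp only [theta]
    rw [Finset.prod_div_distrib, Finset.prod_mul_distrib, Finset.prod_const,
      Finset.card_range, ← h1, ← h2, ← pow_mul]
  rw [theta, h3, div_mul_div_comm,
    mul_comm (qPoch q q ^ 2) (qPoch (q ^ h) (q ^ h) ^ (2 * h)),
    mul_div_mul_left _ _ (pow_ne_zero _ hA)]
end

section
/- Let h ≥ 1, d a divisor of h, δ an integer, and v ∈ Z^2. Then (1/h) Σ_{v' ∈ (Z/h)^2} ζ_h^{(v∧v')δ} (Δ_{h/d})_{v+v'} = gcd(δ,d) · (Δ_{d/gcd(δ,d)})_v, where (Δ_m)_{(r,s)} = m if m | r and m | s, and 0 otherwise, v∧v' is the symplectic product, and ζ_h = e^{2πi/h}. -/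
open scoped BigOperators

noncomputable def DeltaF (m : ℕ) (r s : ℤ) : ℂ :=
  if (m : ℤ) ∣ r ∧ (m : ℤ) ∣ s then (m : ℂ) else 0

private lemma exp_sum_eq (d : ℕ) (hd : 0 < d) (t : ℤ) :
    ∑ b ∈ Finset.range d, Complex.exp (2 * Real.pi * Complex.I * (t * b / d)) =
      if (d : ℤ) ∣ t then (d : ℂ) else 0 := by
  have hd0 : (d : ℂ) ≠ 0 := Nat.cast_ne_zero.mpr hd.ne'
  have hne : (2 * (Real.pi : ℂ) * Complex.I) ≠ 0 := by
    simp [Real.pi_ne_zero, Complex.I_ne_zero, Complex.ofReal_ne_zero]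
  by_cases hdt : (d : ℤ) ∣ t
  · rw [if_pos hdt]
    obtain ⟨u, rfl⟩ := hdt
    have key : ∀ b ∈ Finset.range d,
        Complex.exp (2 * Real.pi * Complex.I * (((d : ℤ) * u : ℤ) * b / d)) = 1 := by
      intro b _
      have harg : (2 * (Real.pi : ℂ) * Complex.I * ((((d : ℤ) * u : ℤ) : ℂ) * b / d))
          = ((u * b : ℤ) : ℂ) * (2 * Real.pi * Complex.I) := by
        push_cast
        field_simp
      rw [harg, Complex.exp_int_mul_two_pi_mul_I]
    rw [Finset.sum_congr rfl key]
    simp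
  · rw [if_neg hdt]
    have hz : ∀ b : ℕ, Complex.exp (2 * Real.pi * Complex.I * (t * b / d))
        = Complex.exp (2 * Real.pi * Complex.I * (t / d)) ^ b := by
      intro b
      rw [← Complex.exp_nat_mul]
      congr 1
      push_cast
      ring
    have hz1 : Complex.exp (2 * Real.pi * Complex.I * (t / d)) ≠ 1 := by
      intro hc
      rw [Complex.exp_eq_one_iff] at hc
      obtain ⟨n, hn⟩ := hc
      apply hdt
      refine ⟨n, ?_⟩
      have h2 : (t : ℂ) / d = n := by
        apply mul_left_cancel₀ hne
        exact hn.trans (by ring)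
      have h3 : (t : ℂ) = (n : ℂ) * d := (div_eq_iff hd0).mp h2
      have h4 : (t : ℂ) = (((d : ℤ) * n : ℤ) : ℂ) := by push_cast; linear_combination h3
      exact_mod_cast h4
    have hzd : Complex.exp (2 * Real.pi * Complex.I * (t / d)) ^ d = 1 := by
      rw [← Complex.exp_nat_mul]
      have harg : (d : ℂ) * (2 * Real.pi * Complex.I * (t / d)) = (t : ℂ) * (2 * Real.pi * Complex.I) := by
        field_simp
      rw [harg]
      have := Complex.exp_int_mul_two_pi_mul_I t
      simpa using this
    rw [Finset.sum_congr rfl (fun b _ => hz b), geom_sum_eq hz1, hzd]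
    simp

private lemma key_sum (m d : ℕ) (hm : 0 < m) (hd : 0 < d) (t x : ℤ) :
    ∑ k ∈ Finset.range (m * d),
        Complex.exp (2 * Real.pi * Complex.I * (t * k / ((m : ℂ) * d))) *
          (if (m : ℤ) ∣ (x + k) then (1 : ℂ) else 0) =
      if (d : ℤ) ∣ t then
        (d : ℂ) * Complex.exp (-(2 * Real.pi * Complex.I * (t * x / ((m : ℂ) * d)))) else 0 := by
  have hm0 : (m : ℤ) ≠ 0 := by exact_mod_cast hm.ne'
  have hmC : (m : ℂ) ≠ 0 := Nat.cast_ne_zero.mpr hm.ne'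
  have hdC : (d : ℂ) ≠ 0 := Nat.cast_ne_zero.mpr hd.ne'
  set i0 : ℕ := ((-x) % (m : ℤ)).toNat with hi0def
  have hi0z : (i0 : ℤ) = (-x) % (m : ℤ) := Int.toNat_of_nonneg (Int.emod_nonneg _ hm0)
  have hi0m : i0 < m := by
    have := Int.emod_lt_of_pos (-x) (by exact_mod_cast hm : (0 : ℤ) < m)
    omega
  have hdvd0 : (m : ℤ) ∣ x + i0 := by
    rw [hi0z]
    have := Int.emod_emod_of_dvd (-x) (dvd_refl (m : ℤ))
    have h1 : (-x) % (m : ℤ) = -x - (m : ℤ) * ((-x) / m) := by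
      rw [Int.emod_def]
    rw [h1]
    exact ⟨-((-x) / m), by ring⟩
  -- characterize divisibility for k in the range
  have hchar : ∀ k : ℕ, (m : ℤ) ∣ x + k ↔ k % m = i0 := by
    intro k
    constructor
    · intro hk
      have h2 : (m : ℤ) ∣ (k : ℤ) - i0 := by
        have h2' := dvd_sub hk hdvd0
        rwa [show x + (k : ℤ) - (x + i0) = (k : ℤ) - i0 from by ring] at h2'
      have h3 : (m : ℤ) ∣ ((k % m : ℕ) : ℤ) - i0 := by
        have h4n : k = m * (k / m) + k % m := (Nat.div_add_mod k m).symm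
        have h4 : (k : ℤ) = (m : ℤ) * ((k / m : ℕ) : ℤ) + ((k % m : ℕ) : ℤ) := by
          exact_mod_cast congrArg (Nat.cast : ℕ → ℤ) h4n
        have h5 : ((k % m : ℕ) : ℤ) - i0 = ((k : ℤ) - i0) - (m : ℤ) * ((k / m : ℕ) : ℤ) := by
          rw [h4]; ring
        rw [h5]
        exact dvd_sub h2 (Dvd.intro _ rfl)
      have e1 : ((k % m : ℕ) : ℤ) < m := by exact_mod_cast Nat.mod_lt _ hm
      have e2 : (0 : ℤ) ≤ ((k % m : ℕ) : ℤ) := Int.natCast_nonneg _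
      have e3 : (i0 : ℤ) < m := by exact_mod_cast hi0m
      have e4 : (0 : ℤ) ≤ (i0 : ℤ) := Int.natCast_nonneg _
      have h5 : ((k % m : ℕ) : ℤ) - i0 = 0 :=
        Int.eq_zero_of_abs_lt_dvd h3 (abs_lt.mpr ⟨by omega, by omega⟩)
      have h6 : ((k % m : ℕ) : ℤ) = (i0 : ℤ) := by omega
      exact_mod_cast h6
    · intro hk
      have h4n : k = m * (k / m) + i0 := by rw [← hk]; exact (Nat.div_add_mod k m).symm
      have h4 : (k : ℤ) = (m : ℤ) * ((k / m : ℕ) : ℤ) + (i0 : ℤ) := by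
        exact_mod_cast congrArg (Nat.cast : ℕ → ℤ) h4n
      rw [show x + (k : ℤ) = (x + i0) + (m : ℤ) * ((k / m : ℕ) : ℤ) by rw [h4]; ring]
      exact dvd_add hdvd0 (Dvd.intro _ rfl)
  -- reduce to a sum over the filtered set
  have step1 : ∑ k ∈ Finset.range (m * d),
      Complex.exp (2 * Real.pi * Complex.I * (t * k / ((m : ℂ) * d))) *
        (if (m : ℤ) ∣ (x + k) then (1 : ℂ) else 0)
      = ∑ a ∈ Finset.range d,
          Complex.exp (2 * Real.pi * Complex.I * (t * ((i0 : ℂ) + m * a) / ((m : ℂ) * d))) := by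
    rw [Finset.sum_congr rfl (fun k _ => by rw [mul_ite, mul_one, mul_zero])]
    rw [← Finset.sum_filter]
    refine Finset.sum_nbij' (fun k => k / m) (fun a => i0 + m * a) ?_ ?_ ?_ ?_ ?_
    · intro k hk
      simp only [Finset.mem_filter, Finset.mem_range] at hk
      exact Finset.mem_range.mpr (Nat.div_lt_of_lt_mul (by omega))
    · intro a ha
      simp only [Finset.mem_range] at ha
      simp only [Finset.mem_filter, Finset.mem_range]
      constructor
      · calc i0 + m * a < m + m * a := by omega
          _ = m * (a + 1) := by ring
          _ ≤ m * d := Nat.mul_le_mul_left _ (by omega)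
      · rw [hchar, Nat.add_mul_mod_self_left, Nat.mod_eq_of_lt hi0m]
    · intro k hk
      simp only [Finset.mem_filter, Finset.mem_range] at hk
      have hkm := (hchar k).mp hk.2
      rw [← hkm]
      exact Nat.mod_add_div k m
    · intro a ha
      show (i0 + m * a) / m = a
      rw [Nat.add_mul_div_left _ _ hm, Nat.div_eq_of_lt hi0m, zero_add]
    · intro k hk
      simp only [Finset.mem_filter, Finset.mem_range] at hk
      have hkm := (hchar k).mp hk.2
      congr 2
      have hkn : (k : ℕ) = i0 + m * (k / m) := by
        conv_lhs => rw [← Nat.div_add_mod k m, hkm]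
        ring
      have : (k : ℂ) = (i0 : ℂ) + (m : ℂ) * ((k / m : ℕ) : ℂ) := by
        exact_mod_cast congrArg (Nat.cast : ℕ → ℂ) hkn
      rw [this]
  rw [step1]
  -- split each exponential
  have step2 : ∀ a : ℕ,
      Complex.exp (2 * Real.pi * Complex.I * (t * ((i0 : ℂ) + m * a) / ((m : ℂ) * d)))
      = Complex.exp (2 * Real.pi * Complex.I * (t * i0 / ((m : ℂ) * d))) *
          Complex.exp (2 * Real.pi * Complex.I * (t * a / d)) := by
    intro a
    rw [← Complex.exp_add]
    congr 1
    field_simp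
  rw [Finset.sum_congr rfl (fun a _ => step2 a), ← Finset.mul_sum, exp_sum_eq d hd t]
  by_cases hdt : (d : ℤ) ∣ t
  · rw [if_pos hdt, if_pos hdt]
    obtain ⟨u, hu⟩ := hdt
    obtain ⟨w, hw⟩ := hdvd0
    rw [mul_comm]
    congr 1
    have key : Complex.exp (2 * Real.pi * Complex.I * (t * (x + i0) / ((m : ℂ) * d))) = 1 := by
      have harg : (2 * (Real.pi : ℂ) * Complex.I * ((t : ℂ) * ((x : ℂ) + i0) / ((m : ℂ) * d)))
          = ((u * w : ℤ) : ℂ) * (2 * Real.pi * Complex.I) := by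
        have hxC : ((x : ℂ) + i0) = (m : ℂ) * w := by
          have hc := congrArg (Int.cast : ℤ → ℂ) hw
          push_cast at hc ⊢
          linear_combination hc
        have htC : (t : ℂ) = (d : ℂ) * u := by
          have hc := congrArg (Int.cast : ℤ → ℂ) hu
          push_cast at hc ⊢
          linear_combination hc
        rw [hxC, htC]
        push_cast
        field_simp
      rw [harg, Complex.exp_int_mul_two_pi_mul_I]
    calc Complex.exp (2 * Real.pi * Complex.I * (t * i0 / ((m : ℂ) * d)))
        = Complex.exp (-(2 * Real.pi * Complex.I * (t * x / ((m : ℂ) * d)))) *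
            Complex.exp (2 * Real.pi * Complex.I * (t * (x + i0) / ((m : ℂ) * d))) := by
          rw [← Complex.exp_add]
          congr 1
          field_simp
          ring
      _ = Complex.exp (-(2 * Real.pi * Complex.I * (t * x / ((m : ℂ) * d)))) := by
          rw [key, mul_one]
  · rw [if_neg hdt, if_neg hdt, mul_zero]

private lemma dvd_iff_aux (δ : ℤ) (d : ℕ) (hd : 0 < d) (r : ℤ) :
    (d : ℤ) ∣ r * δ ↔ ((d / Int.gcd δ (d : ℤ) : ℕ) : ℤ) ∣ r := by
  set g : ℕ := Int.gcd δ (d : ℤ) with hgdef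
  have hg : 0 < g := by
    rw [hgdef, Int.gcd_pos_iff]
    right
    exact_mod_cast hd.ne'
  have hgz : (g : ℤ) ≠ 0 := by exact_mod_cast hg.ne'
  have hgδ : (g : ℤ) ∣ δ := Int.gcd_dvd_left δ (d : ℤ)
  have hgd : (g : ℤ) ∣ (d : ℤ) := Int.gcd_dvd_right δ (d : ℤ)
  have hgdn : g ∣ d := by exact_mod_cast hgd
  obtain ⟨d', hd'⟩ := hgdn
  obtain ⟨δ', hδ'⟩ := hgδ
  have hdg : d / g = d' := by rw [hd']; exact Nat.mul_div_cancel_left _ hg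
  have hdC : (d : ℤ) = (g : ℤ) * d' := by exact_mod_cast congrArg (Nat.cast : ℕ → ℤ) hd'
  have hδdiv : δ / (g : ℤ) = δ' := by rw [hδ']; exact Int.mul_ediv_cancel_left _ hgz
  have hddiv : (d : ℤ) / (g : ℤ) = (d' : ℤ) := by rw [hdC]; exact Int.mul_ediv_cancel_left _ hgz
  have hcop : IsCoprime (δ' : ℤ) (d' : ℤ) := by
    rw [Int.isCoprime_iff_gcd_eq_one]
    have := Int.gcd_div_gcd_div_gcd (i := δ) (j := (d : ℤ)) (by exact_mod_cast hg)
    rwa [← hgdef, hδdiv, hddiv] at this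
  rw [hdg]
  constructor
  · intro hdvd
    rw [hdC, hδ'] at hdvd
    have h2 : (g : ℤ) * d' ∣ (g : ℤ) * (r * δ') := by
      rwa [show (g : ℤ) * (r * δ') = r * ((g : ℤ) * δ') by ring]
    have h3 : (d' : ℤ) ∣ r * δ' := (mul_dvd_mul_iff_left hgz).mp h2
    exact hcop.symm.dvd_of_dvd_mul_right h3
  · intro hdvd
    rw [hdC, hδ']
    rw [show r * ((g : ℤ) * δ') = (g : ℤ) * (r * δ') by ring]
    exact mul_dvd_mul_left _ (hdvd.mul_right δ')

theorem orbifold_delta (h d : ℕ) (hh : 0 < h) (hdvd : d ∣ h) (δ r s : ℤ) :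
    (1 / (h : ℂ)) * ∑ r' ∈ Finset.range h, ∑ s' ∈ Finset.range h,
        Complex.exp (2 * Real.pi * Complex.I * (((r * s' - s * r') * δ) / h)) *
          DeltaF (h / d) (r + r') (s + s') =
      (Int.gcd δ d : ℂ) * DeltaF (d / Int.gcd δ d) r s := by
  obtain ⟨m, hm⟩ := hdvd
  have hd : 0 < d := by
    rcases Nat.eq_zero_or_pos d with h0 | h0
    · rw [h0] at hm; omega
    · exact h0
  have hm0 : 0 < m := by
    rcases Nat.eq_zero_or_pos m with h0 | h0
    · rw [h0] at hm; omega
    · exact h0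
  have hhd : h / d = m := by rw [hm]; exact Nat.mul_div_cancel_left _ hd
  have hmd : h = m * d := by rw [hm]; ring
  have hhC : (h : ℂ) = (m : ℂ) * d := by rw [hmd]; push_cast; ring
  have hmC : (m : ℂ) ≠ 0 := Nat.cast_ne_zero.mpr hm0.ne'
  have hdC : (d : ℂ) ≠ 0 := Nat.cast_ne_zero.mpr hd.ne'
  -- factor the double sum
  have hsplit : ∀ r' s' : ℕ,
      Complex.exp (2 * Real.pi * Complex.I * ((((r : ℂ) * s' - s * r') * δ) / h)) *
          DeltaF (h / d) (r + r') (s + s')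
      = (m : ℂ) *
          ((Complex.exp (2 * Real.pi * Complex.I * (((-(s * δ) : ℤ) : ℂ) * r' / ((m : ℂ) * d))) *
              (if (m : ℤ) ∣ (r + r') then (1 : ℂ) else 0)) *
            (Complex.exp (2 * Real.pi * Complex.I * (((r * δ : ℤ) : ℂ) * s' / ((m : ℂ) * d))) *
              (if (m : ℤ) ∣ (s + s') then (1 : ℂ) else 0))) := by
    intro r' s'
    have hexp : Complex.exp (2 * Real.pi * Complex.I * ((((r : ℂ) * s' - s * r') * δ) / h))
        = Complex.exp (2 * Real.pi * Complex.I * (((-(s * δ) : ℤ) : ℂ) * r' / ((m : ℂ) * d))) *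
          Complex.exp (2 * Real.pi * Complex.I * (((r * δ : ℤ) : ℂ) * s' / ((m : ℂ) * d))) := by
      rw [← Complex.exp_add]
      congr 1
      rw [hhC]
      push_cast
      field_simp
      ring
    rw [hhd]
    unfold DeltaF
    by_cases hA : (m : ℤ) ∣ (r + r')
    · by_cases hB : (m : ℤ) ∣ (s + s')
      · rw [if_pos ⟨hA, hB⟩, if_pos hA, if_pos hB, hexp]
        ring
      · rw [if_neg (by tauto), if_neg hB]
        ring
    · rw [if_neg (by tauto), if_neg hA]
      ring
  rw [Finset.sum_congr rfl (fun r' _ => Finset.sum_congr rfl (fun s' _ => hsplit r' s'))]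
  have hfactor : ∑ r' ∈ Finset.range h, ∑ s' ∈ Finset.range h, (m : ℂ) *
          ((Complex.exp (2 * Real.pi * Complex.I * (((-(s * δ) : ℤ) : ℂ) * r' / ((m : ℂ) * d))) *
              (if (m : ℤ) ∣ (r + r') then (1 : ℂ) else 0)) *
            (Complex.exp (2 * Real.pi * Complex.I * (((r * δ : ℤ) : ℂ) * s' / ((m : ℂ) * d))) *
              (if (m : ℤ) ∣ (s + s') then (1 : ℂ) else 0)))
      = (m : ℂ) *
          ((∑ r' ∈ Finset.range h,
              Complex.exp (2 * Real.pi * Complex.I * (((-(s * δ) : ℤ) : ℂ) * r' / ((m : ℂ) * d))) *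
                (if (m : ℤ) ∣ (r + r') then (1 : ℂ) else 0)) *
            (∑ s' ∈ Finset.range h,
              Complex.exp (2 * Real.pi * Complex.I * (((r * δ : ℤ) : ℂ) * s' / ((m : ℂ) * d))) *
                (if (m : ℤ) ∣ (s + s') then (1 : ℂ) else 0))) := by
    rw [Finset.sum_mul_sum]
    rw [Finset.mul_sum]
    refine Finset.sum_congr rfl fun r' _ => ?_
    rw [Finset.mul_sum]
  rw [hfactor, hmd]
  rw [key_sum m d hm0 hd (-(s * δ)) r, key_sum m d hm0 hd (r * δ) s]
  set g : ℕ := Int.gcd δ (d : ℤ) with hgdef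
  have hg : 0 < g := by
    rw [hgdef, Int.gcd_pos_iff]; right; exact_mod_cast hd.ne'
  have hgdn : g ∣ d := by
    have : (g : ℤ) ∣ (d : ℤ) := Int.gcd_dvd_right δ (d : ℤ)
    exact_mod_cast this
  have hgmul : (g : ℂ) * ((d / g : ℕ) : ℂ) = (d : ℂ) := by
    have : g * (d / g) = d := Nat.mul_div_cancel' hgdn
    exact_mod_cast congrArg (Nat.cast : ℕ → ℂ) this
  by_cases hrδ : (d : ℤ) ∣ r * δ
  · by_cases hsδ : (d : ℤ) ∣ s * δ
    · rw [if_pos (by rwa [dvd_neg]), if_pos hrδ]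
      have hprod : Complex.exp (-(2 * Real.pi * Complex.I * (((-(s * δ) : ℤ) : ℂ) * r / ((m : ℂ) * d)))) *
          Complex.exp (-(2 * Real.pi * Complex.I * (((r * δ : ℤ) : ℂ) * s / ((m : ℂ) * d)))) = 1 := by
        rw [← Complex.exp_add, ← Complex.exp_zero]
        congr 1
        push_cast
        field_simp
        ring
      have hDr : ((d / g : ℕ) : ℤ) ∣ r := (dvd_iff_aux δ d hd r).mp hrδ
      have hDs : ((d / g : ℕ) : ℤ) ∣ s := (dvd_iff_aux δ d hd s).mp hsδ
      rw [show DeltaF (d / g) r s = ((d / g : ℕ) : ℂ) from if_pos ⟨hDr, hDs⟩]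
      have hmdC : ((m * d : ℕ) : ℂ) = (m : ℂ) * d := by push_cast; ring
      rw [hmdC]
      calc (1 / ((m : ℂ) * d)) * ((m : ℂ) *
            ((d : ℂ) * Complex.exp (-(2 * Real.pi * Complex.I * (((-(s * δ) : ℤ) : ℂ) * r / ((m : ℂ) * d)))) *
              ((d : ℂ) * Complex.exp (-(2 * Real.pi * Complex.I * (((r * δ : ℤ) : ℂ) * s / ((m : ℂ) * d)))))))
          = (1 / ((m : ℂ) * d)) * ((m : ℂ) * ((d : ℂ) * (d : ℂ))) *
              (Complex.exp (-(2 * Real.pi * Complex.I * (((-(s * δ) : ℤ) : ℂ) * r / ((m : ℂ) * d)))) *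
                Complex.exp (-(2 * Real.pi * Complex.I * (((r * δ : ℤ) : ℂ) * s / ((m : ℂ) * d))))) := by
            ring
        _ = (d : ℂ) := by
            rw [hprod, mul_one]
            field_simp
        _ = (g : ℂ) * ((d / g : ℕ) : ℂ) := hgmul.symm
    · rw [if_neg (by rwa [dvd_neg])]
      have hDs : ¬ ((d / g : ℕ) : ℤ) ∣ s := fun hc => hsδ ((dvd_iff_aux δ d hd s).mpr hc)
      rw [show DeltaF (d / g) r s = 0 from if_neg (by tauto)]
      ring
  · rw [if_neg hrδ]
    have hDr : ¬ ((d / g : ℕ) : ℤ) ∣ r := fun hc => hrδ ((dvd_iff_aux δ d hd r).mpr hc)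
    rw [show DeltaF (d / g) r s = 0 from if_neg (by tauto)]
    ring
end
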